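/- Let (V, [,], 1) be a unital Leibniz algebra over k (1 central for the bracket) and ε : V → k a Lie character (ε([v,w]) = 0, ε(1) = 1). Then the augmented Leibniz differential d(v₁⋯vₙ) = Σ_{i<j} (−1)^{j−1} v₁⋯[vᵢ,vⱼ]⋯v̂ⱼ⋯vₙ + Σ_{j=1}^n (−1)^{j−1} ε(vⱼ) v₁⋯v̂ⱼ⋯vₙ is a differential (d∘d = 0) and the complex (V^⊗n, d) is acyclic, with contracting homotopy h(v₁⋯vₙ) = (−1)^n v₁⋯vₙ ⊗ 1. -/

import Mathlib

open TensorProduct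

universe u
variable {R V : Type u} [CommRing R] [AddCommGroup V] [Module R V]

variable (R V) in
/-- The iterated tensor power `V^{⊗n}` (left-nested: `TP 0 = R`, `TP (n+1) = V ⊗ TP n`),
bundled as an object of `ModuleCat R` so that the recursion carries its instances. -/
noncomputable def TPb : ℕ → ModuleCat.{u} R
  | 0 => ModuleCat.of R R
  | n + 1 => ModuleCat.of R (V ⊗[R] (TPb n))

variable (R V) in
/-- The iterated tensor power `V^{⊗n}` as a type. -/
noncomputable abbrev TP (n : ℕ) : Type u := (TPb R V n : Type u)

/-- `ε₁ = ε ⊗ id^{⊗n}` : applying `ε` to the first tensor factor of `V^{⊗(n+1)}`. -/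
noncomputable def eps1 (ε : V →ₗ[R] R) (n : ℕ) : TP R V (n+1) →ₗ[R] TP R V n :=
  (TensorProduct.lid R (TP R V n)).toLinearMap ∘ₗ LinearMap.rTensor (TP R V n) ε

/-- The multiplication `μ` applied to the factors `i, i+1` of `V^{⊗(n+1)}` (1-indexed,
`1 ≤ i ≤ n`; junk value `0` out of range). -/
noncomputable def mui (μL : V ⊗[R] V →ₗ[R] V) :
    (n : ℕ) → (i : ℕ) → TP R V (n+1) →ₗ[R] TP R V n
  | 0, _ => 0
  | _+1, 0 => 0
  | n+1, 1 => (LinearMap.rTensor (TP R V n) μL) ∘ₗ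
      (TensorProduct.assoc R V V (TP R V n)).symm.toLinearMap
  | n+1, i+2 => LinearMap.lTensor V (mui μL n (i+1))

/-- Right concatenation with the element `one`: `v₁⋯vₙ ↦ v₁⋯vₙ ⊗ 1`. -/
noncomputable def appendOne (one : V) : (n : ℕ) → TP R V n →ₗ[R] TP R V (n+1)
  | 0 => TensorProduct.mk R V R one
  | n+1 => LinearMap.lTensor V (appendOne one n)

/-- `ζ` applied to the last tensor factor of `V^{⊗(n+1)}`. -/
noncomputable def epsLast (ζ : V →ₗ[R] R) : (n : ℕ) → TP R V (n+1) →ₗ[R] TP R V n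
  | 0 => ζ ∘ₗ (TensorProduct.rid R V).toLinearMap
  | n+1 => LinearMap.lTensor V (epsLast ζ n)

/-- The flip of the first two tensor factors of `V^{⊗(n+2)}`. -/
noncomputable def flip12 (n : ℕ) : TP R V (n+2) →ₗ[R] TP R V (n+2) :=
  (TensorProduct.assoc R V V (TP R V n)).toLinearMap ∘ₗ
    (LinearMap.rTensor (TP R V n) (TensorProduct.comm R V V).toLinearMap) ∘ₗ
    (TensorProduct.assoc R V V (TP R V n)).symm.toLinearMap

/-- `id_V ⊗ f` viewed as a map of iterated tensor powers. -/
noncomputable def lT {m m' : ℕ} (f : TP R V m →ₗ[R] TP R V m') :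
    TP R V (m+1) →ₗ[R] TP R V (m'+1) :=
  LinearMap.lTensor V f

/-- The bracket applied to the factors `1, 2` of `V^{⊗(n+2)}` :
`v₁ ⊗ v₂ ⊗ y ↦ [v₁,v₂] ⊗ y`. -/
noncomputable def brHead (bL : V ⊗[R] V →ₗ[R] V) (n : ℕ) :
    TP R V (n+2) →ₗ[R] TP R V (n+1) :=
  (LinearMap.rTensor (TP R V n) bL) ∘ₗ
    (TensorProduct.assoc R V V (TP R V n)).symm.toLinearMap

/-- The `i = 1` part of the Loday differential on `V^{⊗(n+1)}`:
`K(v₁⋯v_{n+1}) = Σ_{j=2}^{n+1} (−1)^{j−1} [v₁,vⱼ] v₂ ⋯ v̂ⱼ ⋯ v_{n+1}`. -/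
noncomputable def KLei (bL : V ⊗[R] V →ₗ[R] V) : (n : ℕ) → TP R V (n+1) →ₗ[R] TP R V n
  | 0 => 0
  | 1 => - brHead bL 0
  | n+2 => - brHead bL (n+1) - flip12 n ∘ₗ lT (KLei bL (n+1)) ∘ₗ flip12 (n+1)

/-- The Loday differential
`d(v₁⋯vₙ) = Σ_{i<j} (−1)^{j−1} v₁⋯v_{i−1}[vᵢ,vⱼ]v_{i+1}⋯v̂ⱼ⋯vₙ` on `V^{⊗(n+1)}`. -/
noncomputable def dLei (bL : V ⊗[R] V →ₗ[R] V) : (n : ℕ) → TP R V (n+1) →ₗ[R] TP R V n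
  | 0 => 0
  | n+1 => KLei bL (n+1) - lT (dLei bL n)

/-- The Koszul-type part `E(v₁⋯vₙ) = Σⱼ (−1)^{j−1} ε(vⱼ) v₁⋯v̂ⱼ⋯vₙ` on `V^{⊗(n+1)}`. -/
noncomputable def ELei (ε : V →ₗ[R] R) : (n : ℕ) → TP R V (n+1) →ₗ[R] TP R V n
  | 0 => eps1 ε 0
  | n+1 => eps1 ε (n+1) - lT (ELei ε n)


section Aux
variable (bL : V ⊗[R] V →ₗ[R] V) (ε : V →ₗ[R] R)

/-- tensor constructor, typed through `TP` -/
noncomputable def mkT (n : ℕ) : V →ₗ[R] TP R V n →ₗ[R] TP R V (n+1) :=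
  TensorProduct.mk R V (TP R V n)

/-- identity viewed as a retyping map -/
noncomputable def canT (n : ℕ) : TP R V (n+1) →ₗ[R] TP R V (n+1) :=
  LinearMap.id (R := R) (M := TP R V (n+1))

/-- insert `w` at slot 2 -/
noncomputable def Jins (w : V) (n : ℕ) : TP R V (n+1) →ₗ[R] TP R V (n+2) :=
  flip12 n ∘ₗ TensorProduct.mk R V (TP R V (n+1)) w

/-- bracket `v` into the word, result at slot 1 -/
noncomputable def rho (v : V) (n : ℕ) : TP R V n →ₗ[R] TP R V n :=
  KLei bL n ∘ₗ TensorProduct.mk R V (TP R V n) v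

/-- `[v, ·]` on slot 1 -/
noncomputable def gam (v : V) (n : ℕ) : TP R V (n+1) →ₗ[R] TP R V (n+1) :=
  brHead bL n ∘ₗ TensorProduct.mk R V (TP R V (n+1)) v

/-- `[·, w]` on slot 1 -/
noncomputable def bet (w : V) (n : ℕ) : TP R V (n+1) →ₗ[R] TP R V (n+1) :=
  brHead bL n ∘ₗ Jins w n

/-- the full augmented differential -/
noncomputable def Dd (n : ℕ) : TP R V (n+1) →ₗ[R] TP R V n := dLei bL n + ELei ε n

variable {bL ε}

lemma tmul_mk (n : ℕ) (v : V) (x : TP R V n) : v ⊗ₜ[R] x = mkT n v x := rfl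

lemma canT_mk (n : ℕ) (u : V) (s : TP R V n) : canT n (mkT n u s) = mkT n u s := rfl

lemma eps1_mk (n : ℕ) (v : V) (x : TP R V n) :
    eps1 ε n (mkT n v x) = ε v • x := rfl

lemma lT_mk {m m' : ℕ} (f : TP R V m →ₗ[R] TP R V m') (v : V) (x : TP R V m) :
    lT f (mkT m v x) = mkT m' v (f x) := rfl

lemma Jins_mk (w : V) (n : ℕ) (u : V) (s : TP R V n) :
    Jins w n (mkT n u s) = mkT (n+1) u (mkT n w s) := rfl

lemma gam_mk (v : V) (n : ℕ) (u : V) (s : TP R V n) :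
    gam bL v n (mkT n u s) = mkT n (bL (v ⊗ₜ u)) s := rfl

lemma bet_mk (w : V) (n : ℕ) (u : V) (s : TP R V n) :
    bet bL w n (mkT n u s) = mkT n (bL (u ⊗ₜ w)) s := rfl

lemma appendOne_zero_mk (one : V) (r : TP R V 0) :
    appendOne (R := R) one 0 r = mkT 0 one r := rfl

lemma appendOne_succ_mk (one : V) (n : ℕ) (v : V) (x : TP R V n) :
    appendOne one (n+1) (mkT n v x) = mkT (n+1) v (appendOne one n x) := rfl

lemma rho_zero (v : V) : rho bL v 0 = 0 := rfl

lemma rho_one_mk (v u : V) (r : TP R V 0) :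
    rho bL v 1 (mkT 0 u r) = -(mkT 0 (bL (v ⊗ₜ u)) r) := rfl

lemma rho_succ_mk (v : V) (n : ℕ) (u : V) (s : TP R V (n+1)) :
    rho bL v (n+2) (mkT (n+1) u s) =
      -(mkT (n+1) (bL (v ⊗ₜ u)) s) - Jins u n (rho bL v (n+1) s) := rfl

lemma Dd_zero_mk (v : V) (r : TP R V 0) :
    Dd bL ε 0 (mkT 0 v r) = ε v • r := by
  show (0 : TP R V 1 →ₗ[R] TP R V 0) (mkT 0 v r) + eps1 ε 0 (mkT 0 v r) = ε v • r
  rw [LinearMap.zero_apply, zero_add, eps1_mk]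

lemma Dd_succ_mk (n : ℕ) (v : V) (x : TP R V (n+1)) :
    Dd bL ε (n+1) (mkT (n+1) v x) =
      rho bL v (n+1) x + ε v • x - mkT n v (Dd bL ε n x) := by
  have h : Dd bL ε (n+1) (mkT (n+1) v x) =
      (rho bL v (n+1) x - mkT n v (dLei bL n x)) + (ε v • x - mkT n v (ELei ε n x)) := rfl
  have h2 : mkT n v (Dd bL ε n x) = mkT n v (dLei bL n x) + mkT n v (ELei ε n x) := by
    have h3 : Dd bL ε n x = dLei bL n x + ELei ε n x := rfl
    rw [h3, map_add]
  rw [h, h2]; abel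

lemma TP_ind {n : ℕ} {P : TP R V (n+1) → Prop} (x : TP R V (n+1)) (zero : P 0)
    (tmul : ∀ (a : V) (s : TP R V n), P (a ⊗ₜ[R] s))
    (add : ∀ p q : TP R V (n+1), P p → P q → P (p + q)) : P x :=
  TensorProduct.induction_on (R := R) (M := V) (N := TP R V n) (motive := P) x zero tmul add

lemma eps1_Jins (u : V) (n : ℕ) (y : TP R V (n+1)) :
    eps1 ε (n+1) (Jins u n y) = mkT n u (eps1 ε n y) := by
  induction y using TP_ind with
  | zero => simp
  | tmul a s => rw [tmul_mk, Jins_mk, eps1_mk, eps1_mk, map_smul]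
  | add a b ha hb => simp [map_add, ha, hb]

lemma betJ (w u : V) (n : ℕ) (y : TP R V (n+1)) :
    bet bL w (n+1) (Jins u n y) = Jins u n (bet bL w n y) := by
  induction y using TP_ind with
  | zero => simp
  | tmul a s => rw [tmul_mk, Jins_mk, bet_mk, bet_mk, Jins_mk]
  | add a b ha hb => simp [map_add, ha, hb]

lemma gamJ (v u : V) (n : ℕ) (y : TP R V (n+1)) :
    gam bL v (n+1) (Jins u n y) = Jins u n (gam bL v n y) := by
  induction y using TP_ind with
  | zero => simp
  | tmul a s => rw [tmul_mk, Jins_mk, gam_mk, gam_mk, Jins_mk]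
  | add a b ha hb => simp [map_add, ha, hb]

lemma JJ (a u : V) (n : ℕ) (y : TP R V (n+1)) :
    Jins a (n+1) (Jins u n y) = lT (Jins u n) (Jins a n y) := by
  induction y using TP_ind with
  | zero => simp
  | tmul b s => simp only [tmul_mk, Jins_mk, lT_mk]
  | add p q hp hq => simp [map_add, hp, hq]

lemma app_Jins (one w : V) (m : ℕ) (y : TP R V (m+1)) :
    appendOne one (m+2) (Jins (R := R) w m y) =
      Jins w (m+1) (appendOne (R := R) one (m+1) y) := by
  induction y using TP_ind with
  | zero => simp
  | tmul a s =>
      simp only [tmul_mk, Jins_mk, appendOne_succ_mk]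
  | add p q hp hq => simp [map_add, hp, hq]

lemma RJ0 (v u : V) (t : TP R V (0+1)) :
    rho bL v 2 (Jins u 0 t) = mkT 1 (bL (v ⊗ₜ u)) t - Jins u 0 (gam bL v 0 t) := by
  induction t using TP_ind with
  | zero => simp
  | tmul t1 r =>
      simp only [tmul_mk, Jins_mk, rho_succ_mk, gam_mk, map_neg, map_sub, map_add]
      rw [rho_one_mk]
      simp only [map_neg]
      abel
  | add p q hp hq => simp only [map_add, hp, hq]; try abel

lemma RJS (v u : V) (k : ℕ) (t : TP R V ((k+1)+1)) :
    rho bL v (k+3) (Jins u (k+1) t) =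
      mkT (k+2) (bL (v ⊗ₜ u)) t - Jins u (k+1) (gam bL v (k+1) t)
        - lT (Jins u k) (rho bL v (k+2) t + gam bL v (k+1) t) := by
  induction t using TP_ind with
  | zero => simp
  | tmul t1 t' =>
      simp only [tmul_mk, Jins_mk, rho_succ_mk, gam_mk, JJ, lT_mk, map_neg, map_sub,
        map_add]
      abel
  | add p q hp hq => simp only [map_add, hp, hq]; try abel

lemma RJ2_0 (w u : V) (t : TP R V (0+1)) :
    lT (rho bL w 1) (Jins u 0 t) = -(Jins (bL (w ⊗ₜ u)) 0 t) := by
  induction t using TP_ind with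
  | zero => simp
  | tmul t1 r =>
      simp only [tmul_mk, Jins_mk, rho_one_mk, lT_mk, map_neg]
  | add p q hp hq => simp only [map_add, hp, hq]; try abel

lemma RJ2S (w u : V) (k : ℕ) (t : TP R V ((k+1)+1)) :
    lT (rho bL w (k+2)) (Jins u (k+1) t) =
      -(Jins (bL (w ⊗ₜ u)) (k+1) t) - lT (Jins u k) (lT (rho bL w (k+1)) t) := by
  induction t using TP_ind with
  | zero => simp
  | tmul t1 t' =>
      simp only [tmul_mk, Jins_mk, rho_succ_mk, lT_mk, map_neg, map_sub, map_add]
      try abel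
  | add p q hp hq => simp only [map_add, hp, hq]; try abel

lemma Flem (w : V) (m : ℕ) (t : TP R V ((m+1)+1)) :
    Dd bL ε (m+2) (Jins w (m+1) t) =
      -(Jins w m (Dd bL ε (m+1) t)) - ε w • canT (m+1) t - bet bL w (m+1) t
        - lT (rho bL w (m+1)) t
        + mkT (m+1) w (eps1 ε (m+1) t) + Jins w m (eps1 ε (m+1) t) := by
  induction t using TP_ind with
  | zero => simp
  | tmul u s =>
      simp only [tmul_mk, Jins_mk, Dd_succ_mk, rho_succ_mk, bet_mk, lT_mk, eps1_mk,
        canT_mk, map_add, map_sub, map_neg, map_smul]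
      abel
  | add p q hp hq =>
      simp only [map_add, hp, hq, smul_add]
      abel

lemma eps1_rho (hb : ∀ a b : V, ε (bL (a ⊗ₜ b)) = 0) (v : V) :
    ∀ n (x : TP R V (n+1)), eps1 ε n (rho bL v (n+1) x) = 0 := by
  intro n
  induction n with
  | zero =>
      intro x
      induction x using TP_ind with
      | zero => simp
      | tmul u r =>
          rw [tmul_mk, rho_one_mk, map_neg, eps1_mk, hb, zero_smul, neg_zero]
      | add p q hp hq => simp only [map_add, hp, hq, add_zero]
  | succ n ih =>
      intro x
      induction x using TP_ind with
      | zero => simp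
      | tmul u s =>
          rw [tmul_mk, rho_succ_mk, map_sub, map_neg, eps1_mk, hb, zero_smul, neg_zero,
            zero_sub, eps1_Jins, ih s, map_zero, neg_zero]
      | add p q hp hq => simp only [map_add, hp, hq, add_zero]

lemma E5 (hL : ∀ a b c : V,
      bL (a ⊗ₜ bL (b ⊗ₜ c)) = bL (bL (a ⊗ₜ b) ⊗ₜ c) - bL (bL (a ⊗ₜ c) ⊗ₜ b))
    (v w : V) :
    ∀ n (x : TP R V (n+1)),
      gam bL v n (rho bL w (n+1) x) + bet bL w n (rho bL v (n+1) x)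
        = rho bL (bL (v ⊗ₜ w)) (n+1) x := by
  intro n
  induction n with
  | zero =>
      intro x
      induction x using TP_ind with
      | zero => simp
      | tmul u r =>
          rw [tmul_mk, rho_one_mk, rho_one_mk, rho_one_mk, map_neg, map_neg,
            gam_mk, bet_mk, hL v w u]
          simp only [map_sub, LinearMap.sub_apply]
          abel
      | add p q hp hq => simp only [map_add]; rw [add_add_add_comm, hp, hq]; try abel
  | succ n ih =>
      intro x
      induction x using TP_ind with
      | zero => simp
      | tmul u s =>
          rw [tmul_mk, rho_succ_mk, rho_succ_mk, rho_succ_mk]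
          simp only [map_sub, map_neg, gam_mk, bet_mk, gamJ, betJ]
          rw [hL v w u, ← ih s]
          simp only [map_add, map_sub, LinearMap.sub_apply]
          abel
      | add p q hp hq => simp only [map_add]; rw [add_add_add_comm, hp, hq]; try abel

lemma lT_zero {m m' : ℕ} : lT (0 : TP R V m →ₗ[R] TP R V m') = 0 :=
  LinearMap.lTensor_zero V

set_option maxHeartbeats 1000000 in
lemma rho_rho (hL : ∀ a b c : V,
      bL (a ⊗ₜ bL (b ⊗ₜ c)) = bL (bL (a ⊗ₜ b) ⊗ₜ c) - bL (bL (a ⊗ₜ c) ⊗ₜ b))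
    (v w : V) :
    ∀ n (x : TP R V (n+1)),
      rho bL v (n+1) (rho bL w (n+1) x) + rho bL (bL (v ⊗ₜ w)) (n+1) x
        = bet bL w n (rho bL v (n+1) x) + lT (rho bL w n) (rho bL v (n+1) x) := by
  intro n
  induction n with
  | zero =>
      intro x
      induction x using TP_ind with
      | zero => simp
      | tmul u r =>
          rw [tmul_mk]
          rw [rho_one_mk w u r, rho_one_mk v u r, rho_one_mk (bL (v ⊗ₜ w)) u r]
          simp only [map_neg]
          rw [rho_one_mk v (bL (w ⊗ₜ u)) r]
          rw [bet_mk w 0 (bL (v ⊗ₜ u)) r]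
          rw [rho_zero w, lT_zero, LinearMap.zero_apply]
          rw [hL v w u]
          simp only [map_sub, LinearMap.sub_apply]
          abel
      | add p q hp hq => simp only [map_add]; rw [add_add_add_comm, hp, hq]; try abel
  | succ m ih =>
      intro x
      cases m with
      | zero =>
          induction x using TP_ind with
          | zero => simp
          | tmul u s =>
              rw [tmul_mk]
              rw [rho_succ_mk w 0 u s, rho_succ_mk v 0 u s,
                rho_succ_mk (bL (v ⊗ₜ w)) 0 u s]
              simp only [map_sub, map_neg]
              rw [rho_succ_mk v 0 (bL (w ⊗ₜ u)) s]
              rw [RJ0 v u (rho bL w (0+1) s)]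
              rw [bet_mk w 1 (bL (v ⊗ₜ u)) s]
              rw [betJ w u 0 (rho bL v (0+1) s)]
              rw [lT_mk (rho bL w 1) (bL (v ⊗ₜ u)) s]
              rw [RJ2_0 w u (rho bL v (0+1) s)]
              rw [hL v w u, ← E5 hL v w 0 s]
              simp only [map_add, map_sub, map_neg, LinearMap.sub_apply]
              abel
          | add p q hp hq => simp only [map_add]; rw [add_add_add_comm, hp, hq]; try abel
      | succ k =>
          induction x using TP_ind with
          | zero => simp
          | tmul u s =>
              rw [tmul_mk]
              rw [rho_succ_mk w (k+1) u s, rho_succ_mk v (k+1) u s,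
                rho_succ_mk (bL (v ⊗ₜ w)) (k+1) u s]
              simp only [map_sub, map_neg]
              rw [rho_succ_mk v (k+1) (bL (w ⊗ₜ u)) s]
              rw [RJS v u k (rho bL w (k+2) s)]
              rw [bet_mk w (k+2) (bL (v ⊗ₜ u)) s]
              rw [betJ w u (k+1) (rho bL v (k+2) s)]
              rw [lT_mk (rho bL w (k+2)) (bL (v ⊗ₜ u)) s]
              rw [RJ2S w u k (rho bL v (k+2) s)]
              have hI := eq_sub_of_add_eq (ih s)
              rw [hI]
              rw [hL v w u, ← E5 hL v w (k+1) s]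
              simp only [map_add, map_sub, map_neg, LinearMap.sub_apply]
              abel
          | add p q hp hq => simp only [map_add]; rw [add_add_add_comm, hp, hq]; try abel

lemma canT_apply (n : ℕ) (y : TP R V (n+1)) : canT (R := R) (V := V) n y = y := rfl

lemma Dd_zero_apply (y : TP R V 1) : Dd bL ε 0 y = eps1 ε 0 y := by
  show (0 : TP R V 1 →ₗ[R] TP R V 0) y + eps1 ε 0 y = eps1 ε 0 y
  rw [LinearMap.zero_apply, zero_add]

lemma rho_app (one : V) (hone : ∀ a : V, bL (a ⊗ₜ one) = 0) (v : V) :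
    ∀ n (x : TP R V n),
      rho bL v (n+1) (appendOne one n x) = appendOne one n (rho bL v n x) := by
  intro n
  induction n with
  | zero =>
      intro x
      rw [appendOne_zero_mk, rho_one_mk v one x, hone v, rho_zero]
      simp only [map_zero, LinearMap.zero_apply, neg_zero]
  | succ m ih =>
      intro x
      have key : ∀ y : TP R V (m+1),
          rho bL v (m+2) (appendOne one (m+1) y)
            = appendOne one (m+1) (rho bL v (m+1) y) := by
        intro y
        induction y using TP_ind with
        | zero => simp
        | tmul w s =>
            rw [tmul_mk, appendOne_succ_mk, rho_succ_mk v m w (appendOne one m s),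
              ih s]
            cases m with
            | zero =>
                rw [rho_zero v]
                simp only [LinearMap.zero_apply, map_zero, sub_zero]
                rw [rho_one_mk v w s]
                simp only [map_neg]
                rw [appendOne_succ_mk]
            | succ k =>
                rw [rho_succ_mk v k w s]
                simp only [map_sub, map_neg]
                rw [appendOne_succ_mk, app_Jins]
        | add p q hp hq => simp only [map_add, hp, hq]
      exact key x

lemma D_app (one : V) (hone : ∀ a : V, bL (a ⊗ₜ one) = 0) (hεone : ε one = 1) :
    ∀ n (x : TP R V (n+1)),
      Dd bL ε (n+1) (appendOne one (n+1) x)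
        = appendOne one n (Dd bL ε n x) + ((-1 : R))^(n+1) • canT n x := by
  intro n
  induction n with
  | zero =>
      intro x
      induction x using TP_ind with
      | zero => simp
      | tmul v r =>
          rw [tmul_mk, appendOne_succ_mk, appendOne_zero_mk, Dd_succ_mk,
            rho_one_mk v one r, hone v, Dd_zero_mk one r, hεone, one_smul,
            Dd_zero_mk v r, canT_mk]
          simp only [map_zero, LinearMap.zero_apply, neg_zero, zero_add, map_smul,
            appendOne_zero_mk, pow_one, neg_smul, one_smul]
          abel
      | add p q hp hq =>
          simp only [map_add, smul_add]
          rw [hp, hq]; abel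
  | succ m ih =>
      intro x
      induction x using TP_ind with
      | zero => simp
      | tmul v s =>
          rw [tmul_mk, appendOne_succ_mk, Dd_succ_mk, rho_app one hone v (m+1) s,
            ih s, Dd_succ_mk m v s, canT_mk]
          simp only [map_add, map_sub, map_smul, map_neg]
          rw [appendOne_succ_mk, canT_apply]
          have hpow : ((-1 : R))^(m+2) = -((-1 : R))^(m+1) := by rw [pow_succ]; ring
          rw [hpow, neg_smul]
          abel
      | add p q hp hq =>
          simp only [map_add, smul_add]
          rw [hp, hq]; abel

lemma I1 (hL : ∀ a b c : V,
      bL (a ⊗ₜ bL (b ⊗ₜ c)) = bL (bL (a ⊗ₜ b) ⊗ₜ c) - bL (bL (a ⊗ₜ c) ⊗ₜ b))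
    (hb : ∀ a b : V, ε (bL (a ⊗ₜ b)) = 0) (v : V) :
    ∀ n (x : TP R V (n+1)),
      Dd bL ε n (rho bL v (n+1) x) = rho bL v n (Dd bL ε n x) := by
  intro n
  induction n with
  | zero =>
      intro x
      induction x using TP_ind with
      | zero => simp
      | tmul u r =>
          rw [tmul_mk, rho_one_mk v u r, map_neg, Dd_zero_mk, hb, zero_smul, neg_zero,
            rho_zero]
          simp only [LinearMap.zero_apply]
      | add p q hp hq => simp only [map_add, hp, hq]
  | succ m ih =>
      cases m with
      | zero =>
          intro x
          induction x using TP_ind with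
          | zero => simp
          | tmul u s =>
              rw [tmul_mk]
              have key : ∀ s' : TP R V (0+1),
                  Dd bL ε (0+1) (rho bL v (0+1+1) (mkT (0+1) u s'))
                    = rho bL v (0+1) (Dd bL ε (0+1) (mkT (0+1) u s')) := by
                intro s'
                induction s' using TP_ind with
                | zero => simp
                | tmul u' r =>
                    rw [tmul_mk]
                    rw [rho_succ_mk v 0 u (mkT 0 u' r), rho_one_mk v u' r]
                    simp only [map_sub, map_neg, Jins_mk]
                    rw [Dd_succ_mk 0 (bL (v ⊗ₜ u)) (mkT 0 u' r),
                      Dd_succ_mk 0 (bL (v ⊗ₜ u')) (mkT 0 u r),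
                      Dd_succ_mk 0 u (mkT 0 u' r)]
                    rw [rho_one_mk (bL (v ⊗ₜ u)) u' r, rho_one_mk (bL (v ⊗ₜ u')) u r,
                      rho_one_mk u u' r]
                    rw [Dd_zero_mk u' r, Dd_zero_mk u r]
                    simp only [map_add, map_sub, map_neg, map_smul]
                    rw [rho_one_mk v (bL (u ⊗ₜ u')) r]
                    rw [rho_one_mk v u' r, rho_one_mk v u r]
                    rw [hb v u, hb v u']
                    simp only [zero_smul, smul_neg, neg_zero, zero_sub, sub_zero,
                      add_zero, zero_add, neg_neg, smul_zero, map_zero]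
                    rw [hL v u u']
                    simp only [map_sub, LinearMap.sub_apply, zero_smul, smul_neg]
                    abel
                | add p q hp hq =>
                    simp only [map_add, hp, hq]
              exact key s
          | add p q hp hq => simp only [map_add, hp, hq]
      | succ k =>
          intro x
          induction x using TP_ind with
          | zero => simp
          | tmul w x' =>
              rw [tmul_mk]
              rw [rho_succ_mk v (k+1) w x']
              simp only [map_sub, map_neg]
              rw [Dd_succ_mk (k+1) (bL (v ⊗ₜ w)) x']
              rw [Flem w k (rho bL v (k+2) x')]
              rw [eps1_rho hb v (k+1) x']
              try simp only [map_zero]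
              try simp only [add_zero]
              rw [canT_apply]
              rw [ih x']
              rw [Dd_succ_mk (k+1) w x']
              simp only [map_add, map_sub, map_smul]
              rw [rho_succ_mk v k w (Dd bL ε (k+1) x')]
              have hR := eq_sub_of_add_eq (rho_rho hL v w (k+1) x')
              rw [hR]
              rw [hb v w, zero_smul]
              try simp only [map_add, map_sub, map_neg, map_smul]
              abel
          | add p q hp hq => simp only [map_add, hp, hq]

lemma DDcomp (hL : ∀ a b c : V,
      bL (a ⊗ₜ bL (b ⊗ₜ c)) = bL (bL (a ⊗ₜ b) ⊗ₜ c) - bL (bL (a ⊗ₜ c) ⊗ₜ b))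
    (hb : ∀ a b : V, ε (bL (a ⊗ₜ b)) = 0) :
    ∀ n (x : TP R V ((n+1)+1)), Dd bL ε n (Dd bL ε (n+1) x) = 0 := by
  intro n
  induction n with
  | zero =>
      intro x
      induction x using TP_ind with
      | zero => simp
      | tmul v s =>
          rw [tmul_mk, Dd_succ_mk 0 v s]
          simp only [map_add, map_sub, map_smul]
          rw [Dd_zero_mk v (Dd bL ε 0 s), Dd_zero_apply, eps1_rho hb v 0 s]
          abel
      | add p q hp hq => simp only [map_add, hp, hq, add_zero]
  | succ m ih =>
      intro x
      induction x using TP_ind with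
      | zero => simp
      | tmul v s =>
          rw [tmul_mk, Dd_succ_mk (m+1) v s]
          simp only [map_add, map_sub, map_smul]
          rw [I1 hL hb v (m+1) s, Dd_succ_mk m v (Dd bL ε (m+1) s), ih s]
          simp only [map_zero]
          abel
      | add p q hp hq => simp only [map_add, hp, hq, add_zero]

end Aux
/-- for a unital Leibniz algebra `(V, [,], 1)` and a Lie character `ε`,
the augmented Leibniz differential
`d(v₁⋯vₙ) = Σ_{i<j} (−1)^{j−1} v₁⋯[vᵢ,vⱼ]⋯v̂ⱼ⋯vₙ + Σⱼ (−1)^{j−1} ε(vⱼ)v₁⋯v̂ⱼ⋯vₙ`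
squares to zero and the complex is acyclic, with contracting homotopy
`h(v₁⋯vₙ) = (−1)ⁿ v₁⋯vₙ ⊗ 1`. -/
theorem augmented_leibniz_complex_acyclic
    (br : V →ₗ[R] V →ₗ[R] V) (one : V)
    (hLeibniz : ∀ v w u : V, br v (br w u) = br (br v w) u - br (br v u) w)
    (hcentral_l : ∀ v : V, br one v = 0)
    (hcentral_r : ∀ v : V, br v one = 0)
    (ε : V →ₗ[R] R)
    (hεbr : ∀ v w : V, ε (br v w) = 0) (hεone : ε one = 1) :
    (∀ n : ℕ,
      (dLei (TensorProduct.lift br) n + ELei ε n) ∘ₗ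
        (dLei (TensorProduct.lift br) (n+1) + ELei ε (n+1)) = 0) ∧
    (∀ n : ℕ,
      (((-1 : R)^n) • appendOne one n) ∘ₗ (dLei (TensorProduct.lift br) n + ELei ε n) +
        (dLei (TensorProduct.lift br) (n+1) + ELei ε (n+1)) ∘ₗ
          (((-1 : R)^(n+1)) • appendOne one (n+1)) =
      LinearMap.id) := by
  have hL : ∀ a b c : V,
      (TensorProduct.lift br) (a ⊗ₜ (TensorProduct.lift br) (b ⊗ₜ c))
        = (TensorProduct.lift br) ((TensorProduct.lift br) (a ⊗ₜ b) ⊗ₜ c)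
          - (TensorProduct.lift br) ((TensorProduct.lift br) (a ⊗ₜ c) ⊗ₜ b) := by
    intro a b c
    simp only [TensorProduct.lift.tmul]
    exact hLeibniz a b c
  have hb : ∀ a b : V, ε ((TensorProduct.lift br) (a ⊗ₜ b)) = 0 := by
    intro a b
    rw [TensorProduct.lift.tmul]
    exact hεbr a b
  have hone : ∀ a : V, (TensorProduct.lift br) (a ⊗ₜ one) = 0 := by
    intro a
    rw [TensorProduct.lift.tmul]
    exact hcentral_r a
  constructor
  · intro n
    apply LinearMap.ext
    intro x
    exact DDcomp hL hb n x
  · intro n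
    apply LinearMap.ext
    intro x
    have h := D_app (bL := TensorProduct.lift br) (ε := ε) one hone hεone n x
    show ((-1:R))^n • appendOne one n (Dd (TensorProduct.lift br) ε n x)
        + Dd (TensorProduct.lift br) ε (n+1) (((-1:R))^(n+1) • appendOne one (n+1) x)
        = x
    rw [map_smul, h, canT_apply, smul_add, smul_smul]
    have h1 : ((-1:R))^(n+1) * ((-1:R))^(n+1) = 1 := by
      rw [← pow_add]
      exact Even.neg_one_pow ⟨n+1, rfl⟩
    rw [h1, one_smul]
    have h2 : ((-1:R))^(n+1) = -((-1:R))^n := by rw [pow_succ]; ring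
    rw [h2, neg_smul]
    abel
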